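/- arXiv:1401.0295 — 8 statements merged into one kernel-verified Lean document; each statement's English description precedes it below -/
import Mathlib

section
/- Let d ∈ ℕ and define the taming map ψ : ℝ^d → ℝ^d by ψ(v) = v/(1 + ‖v‖²). Then for every v ∈ ℝ^d it holds that ‖ψ'(v) − Id_{ℝ^d}‖_{L(ℝ^d)} ≤ 3·(min{1, ‖v‖})². -/
/-- The taming map `ψ(v) = v / (1 + ‖v‖²)` on `ℝ^d`. -/
noncomputable def tamingMap (d : ℕ) (v : EuclideanSpace ℝ (Fin d)) : EuclideanSpace ℝ (Fin d) :=
  (1 + ‖v‖ ^ 2)⁻¹ • v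

set_option maxHeartbeats 1000000 in
/-- `‖ψ'(v) − Id‖ ≤ 3 (min{1, ‖v‖})²` for the taming map `ψ`. -/
theorem tamingMap_fderiv_sub_id_norm_le (d : ℕ) (v : EuclideanSpace ℝ (Fin d)) :
    ‖fderiv ℝ (tamingMap d) v - ContinuousLinearMap.id ℝ (EuclideanSpace ℝ (Fin d))‖
      ≤ 3 * (min 1 ‖v‖) ^ 2 := by
  have hpos : (0:ℝ) < 1 + ‖v‖ ^ 2 := by positivity
  have hne : (1 + ‖v‖ ^ 2) ≠ 0 := ne_of_gt hpos
  -- derivative of w ↦ 1 + ‖w‖²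
  have hh : HasFDerivAt (fun w : EuclideanSpace ℝ (Fin d) => 1 + ‖w‖ ^ 2) (2 • innerSL ℝ v) v := by
    have := (hasFDerivAt_id v).norm_sq.const_add (1:ℝ)
    simpa using this
  -- derivative of w ↦ (1 + ‖w‖²)⁻¹
  have hc : HasFDerivAt (fun w : EuclideanSpace ℝ (Fin d) => (1 + ‖w‖ ^ 2)⁻¹)
      ((-((1 + ‖v‖ ^ 2) ^ 2)⁻¹) • (2 • innerSL ℝ v)) v := by
    have hinv := hasDerivAt_inv hne
    exact hinv.comp_hasFDerivAt v hh
  set c' : EuclideanSpace ℝ (Fin d) →L[ℝ] ℝ := (-((1 + ‖v‖ ^ 2) ^ 2)⁻¹) • (2 • innerSL ℝ v) with hc'def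
  have hf : HasFDerivAt (tamingMap d)
      ((1 + ‖v‖ ^ 2)⁻¹ • ContinuousLinearMap.id ℝ (EuclideanSpace ℝ (Fin d)) + c'.smulRight v) v := by
    exact hc.smul (hasFDerivAt_id v)
  rw [hf.fderiv]
  have hsub : (1 + ‖v‖ ^ 2)⁻¹ • ContinuousLinearMap.id ℝ (EuclideanSpace ℝ (Fin d)) + c'.smulRight v
      - ContinuousLinearMap.id ℝ (EuclideanSpace ℝ (Fin d))
      = ((1 + ‖v‖ ^ 2)⁻¹ - 1) • ContinuousLinearMap.id ℝ (EuclideanSpace ℝ (Fin d)) + c'.smulRight v := by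
    ext w; simp [sub_smul]; abel
  rw [hsub]
  have h1 : ‖((1 + ‖v‖ ^ 2)⁻¹ - 1) • ContinuousLinearMap.id ℝ (EuclideanSpace ℝ (Fin d))‖
      ≤ |(1 + ‖v‖ ^ 2)⁻¹ - 1| := by
    refine ContinuousLinearMap.opNorm_le_bound _ (abs_nonneg _) fun w => ?_
    simp only [ContinuousLinearMap.smul_apply, ContinuousLinearMap.id_apply, norm_smul,
      Real.norm_eq_abs]
    exact le_rfl
  have hc'norm : ‖c'‖ ≤ ((1 + ‖v‖ ^ 2) ^ 2)⁻¹ * (2 * ‖v‖) := by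
    have h2 : (0:ℝ) ≤ ((1 + ‖v‖ ^ 2) ^ 2)⁻¹ := by positivity
    refine ContinuousLinearMap.opNorm_le_bound _ (by positivity) fun w => ?_
    have hcw : ‖c' w‖ = ((1 + ‖v‖ ^ 2) ^ 2)⁻¹ * ‖(2:ℝ) * inner ℝ v w‖ := by
      rw [hc'def]
      simp only [ContinuousLinearMap.smul_apply, ContinuousLinearMap.coe_smul',
        Pi.smul_apply, innerSL_apply_apply, norm_smul, Real.norm_eq_abs, smul_eq_mul,
        abs_neg, abs_of_nonneg h2]
      rw [abs_mul, abs_neg, abs_of_nonneg h2]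
      congr 1
      simp [smul_eq_mul, nsmul_eq_mul]
    rw [hcw]
    have hiw : |(inner ℝ v w : ℝ)| ≤ ‖v‖ * ‖w‖ := abs_real_inner_le_norm v w
    rw [Real.norm_eq_abs, abs_mul, abs_two]
    calc ((1 + ‖v‖ ^ 2) ^ 2)⁻¹ * (2 * |(inner ℝ v w : ℝ)|)
        ≤ ((1 + ‖v‖ ^ 2) ^ 2)⁻¹ * (2 * (‖v‖ * ‖w‖)) := by
          refine mul_le_mul_of_nonneg_left (by linarith) h2
      _ = ((1 + ‖v‖ ^ 2) ^ 2)⁻¹ * (2 * ‖v‖) * ‖w‖ := by ring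
  have h2 : ‖c'.smulRight v‖ ≤ ((1 + ‖v‖ ^ 2) ^ 2)⁻¹ * (2 * ‖v‖) * ‖v‖ := by
    calc ‖c'.smulRight v‖ ≤ ‖c'‖ * ‖v‖ := ContinuousLinearMap.norm_smulRight_apply c' v ▸ le_refl _
      _ ≤ _ := mul_le_mul_of_nonneg_right hc'norm (norm_nonneg v)
  refine le_trans (norm_add_le _ _) ?_
  refine le_trans (add_le_add h1 h2) ?_
  -- arithmetic bound
  set t := ‖v‖ ^ 2 with ht
  have htnn : (0:ℝ) ≤ t := by positivity
  have hmin : (min 1 ‖v‖) ^ 2 = min 1 t := by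
    rcases le_total 1 ‖v‖ with h | h
    · have h' : (1:ℝ) ≤ t := by rw [ht]; nlinarith
      rw [min_eq_left h, min_eq_left h']; norm_num
    · have h' : t ≤ 1 := by rw [ht]; nlinarith [norm_nonneg v]
      rw [min_eq_right h, min_eq_right h']
  rw [hmin]
  have habs : |(1 + t)⁻¹ - 1| = t / (1 + t) := by
    rw [abs_of_nonpos (by
      have : (1 + t)⁻¹ ≤ 1 := by
        rw [inv_le_one_iff₀]; right; linarith
      linarith)]
    field_simp; ring
  rw [habs]
  have key : ((1 + t) ^ 2)⁻¹ * (2 * ‖v‖) * ‖v‖ = ((1 + t) ^ 2)⁻¹ * (2 * t) := by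
    rw [ht]; ring
  rw [key]
  rcases le_total t 1 with h | h
  · rw [min_eq_right h]
    have h1' : t / (1 + t) ≤ t := by
      rw [div_le_iff₀ (by linarith)]; nlinarith
    have h2' : ((1 + t) ^ 2)⁻¹ * (2 * t) ≤ 2 * t := by
      have : ((1 + t) ^ 2)⁻¹ ≤ 1 := by
        rw [inv_le_one_iff₀]; right; nlinarith
      nlinarith
    linarith
  · rw [min_eq_left h]
    have h1' : t / (1 + t) ≤ 1 := by
      rw [div_le_one (by linarith)]; linarith
    have h2' : ((1 + t) ^ 2)⁻¹ * (2 * t) ≤ 2 := by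
      rw [inv_mul_le_iff₀ (by positivity)]; nlinarith
    linarith
end

section
/- Let d ∈ ℕ and define the taming map ψ : ℝ^d → ℝ^d by ψ(v) = v/(1 + ‖v‖²). Then ψ is twice Fréchet differentiable and for every v ∈ ℝ^d and every u ∈ ℝ^d with ‖u‖ ≤ 1 it holds that ‖ψ''(v)(u, u)‖ ≤ 14·min{1, ‖v‖}. -/
set_option maxHeartbeats 2000000

/-- The taming map is twice Fréchet differentiable and its second derivative satisfies
`‖ψ''(v)(u, u)‖ ≤ 14 · min{1, ‖v‖}` for all `v` and all `u` with `‖u‖ ≤ 1`. -/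
theorem tamingMap_second_fderiv_bound (d : ℕ) :
    (Differentiable ℝ (tamingMap d) ∧ Differentiable ℝ (fderiv ℝ (tamingMap d))) ∧
      ∀ v u : EuclideanSpace ℝ (Fin d), ‖u‖ ≤ 1 →
        ‖fderiv ℝ (fderiv ℝ (tamingMap d)) v u u‖ ≤ 14 * min 1 ‖v‖ := by
  classical
  set E := EuclideanSpace ℝ (Fin d)
  have hqpos : ∀ w : E, (0:ℝ) < 1 + ‖w‖ ^ 2 := fun w => by positivity
  have hqne : ∀ w : E, (1 + ‖w‖ ^ 2 : ℝ) ≠ 0 := fun w => (hqpos w).ne'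
  -- smoothness
  have hcd : ContDiff ℝ 2 (tamingMap d) := by
    have h1 : ContDiff ℝ 2 (fun w : E => 1 + ‖w‖ ^ 2) :=
      contDiff_const.add (contDiff_norm_sq ℝ)
    exact (h1.inv hqne).smul contDiff_id
  have hdiff1 : Differentiable ℝ (tamingMap d) := hcd.differentiable (by norm_num)
  have hcdf : ContDiff ℝ 1 (fderiv ℝ (tamingMap d)) := hcd.fderiv_right (by norm_num)
  have hdiff2 : Differentiable ℝ (fderiv ℝ (tamingMap d)) := hcdf.differentiable (by norm_num)
  refine ⟨⟨hdiff1, hdiff2⟩, ?_⟩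
  intro v u hu
  -- first derivative
  have hq : ∀ w : E, HasFDerivAt (fun w : E => 1 + ‖w‖ ^ 2)
      ((2:ℕ) • (innerSL ℝ w)) w := by
    intro w
    simpa using (hasStrictFDerivAt_norm_sq w).hasFDerivAt.const_add (1:ℝ)
  have hg : ∀ w : E, HasFDerivAt (fun w : E => (1 + ‖w‖ ^ 2)⁻¹)
      ((-(((1 + ‖w‖ ^ 2)) ^ 2)⁻¹) • ((2:ℕ) • (innerSL ℝ w))) w := by
    intro w
    exact (hasDerivAt_inv (hqne w)).comp_hasFDerivAt w (hq w)
  have hψ : ∀ w : E, HasFDerivAt (tamingMap d)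
      ((1 + ‖w‖ ^ 2)⁻¹ • ContinuousLinearMap.id ℝ E +
        ((-(((1 + ‖w‖ ^ 2)) ^ 2)⁻¹) • ((2:ℕ) • (innerSL ℝ w))).smulRight w) w := by
    intro w
    exact (hg w).smul (hasFDerivAt_id w)
  have hD : ∀ w : E, fderiv ℝ (tamingMap d) w =
      (1 + ‖w‖ ^ 2)⁻¹ • ContinuousLinearMap.id ℝ E +
        ((-(((1 + ‖w‖ ^ 2)) ^ 2)⁻¹) • ((2:ℕ) • (innerSL ℝ w))).smulRight w :=
    fun w => (hψ w).fderiv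
  -- reduce second derivative applied twice to derivative of w ↦ fderiv ψ w u
  have hred : fderiv ℝ (fderiv ℝ (tamingMap d)) v u u
      = fderiv ℝ (fun w : E => fderiv ℝ (tamingMap d) w u) v u := by
    rw [fderiv_clm_apply (hdiff2 v) (differentiableAt_const u)]
    simp
  -- the function w ↦ fderiv ψ w u, rewritten with inner u w
  have hFeq : (fun w : E => fderiv ℝ (tamingMap d) w u)
      = fun w : E => (1 + ‖w‖ ^ 2)⁻¹ • u +
          (-2 * ((1 + ‖w‖ ^ 2)⁻¹) ^ 2 * (innerSL ℝ u w)) • w := by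
    funext w
    rw [hD w]
    simp only [ContinuousLinearMap.add_apply, ContinuousLinearMap.coe_smul',
      Pi.smul_apply, ContinuousLinearMap.id_apply, ContinuousLinearMap.coe_id', id_eq, ContinuousLinearMap.smulRight_apply,
      ContinuousLinearMap.smul_apply, innerSL_apply_apply, smul_eq_mul, nsmul_eq_mul,
      Nat.cast_ofNat, ← inv_pow]
    rw [real_inner_comm w u]
    rw [show (ContinuousLinearMap.id ℝ E) u = u from rfl]
    module
  -- second derivative of the rewritten function at v
  have hgsq : HasFDerivAt (fun w : E => ((1 + ‖w‖ ^ 2)⁻¹) ^ 2)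
      ((1 + ‖v‖ ^ 2)⁻¹ • (-(((1 + ‖v‖ ^ 2)) ^ 2)⁻¹ • ((2:ℕ) • (innerSL ℝ v))) +
        (1 + ‖v‖ ^ 2)⁻¹ • (-(((1 + ‖v‖ ^ 2)) ^ 2)⁻¹ • ((2:ℕ) • (innerSL ℝ v)))) v := by
    have h := (hg v).mul (hg v)
    have hfun : (fun w : E => (1 + ‖w‖ ^ 2)⁻¹ * (1 + ‖w‖ ^ 2)⁻¹)
        = fun w : E => ((1 + ‖w‖ ^ 2)⁻¹) ^ 2 := funext fun w => (sq _).symm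
    rw [← hfun]; exact h
  have hs : HasFDerivAt (fun w : E => -2 * ((1 + ‖w‖ ^ 2)⁻¹) ^ 2 * (innerSL ℝ u w))
      ((-2 * ((1 + ‖v‖ ^ 2)⁻¹) ^ 2) • (innerSL ℝ u : E →L[ℝ] ℝ) +
        (innerSL ℝ u v) • ((-2 : ℝ) •
          ((1 + ‖v‖ ^ 2)⁻¹ • (-(((1 + ‖v‖ ^ 2)) ^ 2)⁻¹ • ((2:ℕ) • (innerSL ℝ v))) +
            (1 + ‖v‖ ^ 2)⁻¹ • (-(((1 + ‖v‖ ^ 2)) ^ 2)⁻¹ • ((2:ℕ) • (innerSL ℝ v)))))) v :=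
    (hgsq.const_mul (-2 : ℝ)).mul (innerSL ℝ u).hasFDerivAt
  have hF : HasFDerivAt
      (fun w : E => (1 + ‖w‖ ^ 2)⁻¹ • u +
        (-2 * ((1 + ‖w‖ ^ 2)⁻¹) ^ 2 * (innerSL ℝ u w)) • w)
      (((1 + ‖v‖ ^ 2)⁻¹ • (0 : E →L[ℝ] E) +
          ((-(((1 + ‖v‖ ^ 2)) ^ 2)⁻¹ • ((2:ℕ) • (innerSL ℝ v))).smulRight u)) +
        ((-2 * ((1 + ‖v‖ ^ 2)⁻¹) ^ 2 * (innerSL ℝ u v)) • ContinuousLinearMap.id ℝ E +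
          ((-2 * ((1 + ‖v‖ ^ 2)⁻¹) ^ 2) • (innerSL ℝ u : E →L[ℝ] ℝ) +
            (innerSL ℝ u v) • ((-2 : ℝ) •
              ((1 + ‖v‖ ^ 2)⁻¹ • (-(((1 + ‖v‖ ^ 2)) ^ 2)⁻¹ • ((2:ℕ) • (innerSL ℝ v))) +
                (1 + ‖v‖ ^ 2)⁻¹ • (-(((1 + ‖v‖ ^ 2)) ^ 2)⁻¹ • ((2:ℕ) • (innerSL ℝ v)))))).smulRight v)) v :=
    ((hg v).smul (hasFDerivAt_const u v)).add (hs.smul (hasFDerivAt_id v))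
  have key : fderiv ℝ (fderiv ℝ (tamingMap d)) v u u
      = ((-4 * ((1 + ‖v‖ ^ 2)⁻¹) ^ 2 * (inner ℝ u v : ℝ)) • u +
          (-2 * ((1 + ‖v‖ ^ 2)⁻¹) ^ 2 * ‖u‖ ^ 2 +
            8 * ((1 + ‖v‖ ^ 2)⁻¹) ^ 3 * (inner ℝ u v : ℝ) ^ 2) • v) := by
    rw [hred, hFeq, hF.fderiv]
    simp only [ContinuousLinearMap.add_apply, ContinuousLinearMap.coe_smul',
      Pi.smul_apply, ContinuousLinearMap.id_apply, ContinuousLinearMap.coe_id', id_eq, ContinuousLinearMap.smulRight_apply,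
      ContinuousLinearMap.smul_apply, ContinuousLinearMap.zero_apply, innerSL_apply_apply,
      smul_eq_mul, nsmul_eq_mul, Nat.cast_ofNat, ← inv_pow]
    rw [real_inner_comm v u, real_inner_self_eq_norm_sq u]
    module
  rw [key]
  set g : ℝ := (1 + ‖v‖ ^ 2)⁻¹ with hgdef
  set n : ℝ := ‖v‖ with hndef
  set r : ℝ := (inner ℝ u v : ℝ) with hrdef
  have hn0 : 0 ≤ n := norm_nonneg v
  have hm0 : 0 ≤ ‖u‖ := norm_nonneg u
  have hgpos : 0 < g := by rw [hgdef]; positivity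
  have hgq : g * (1 + n ^ 2) = 1 := by
    rw [hgdef, hndef]; field_simp
  have hg1 : g ≤ 1 := by nlinarith [sq_nonneg n]
  have hgn2 : g * n ^ 2 ≤ 1 := by nlinarith
  have h2gn : 2 * (g * n) ≤ 1 := by nlinarith [sq_nonneg (n - 1)]
  have hr : |r| ≤ n := by
    calc |r| ≤ ‖u‖ * ‖v‖ := abs_real_inner_le_norm u v
    _ ≤ 1 * n := by rw [← hndef]; exact mul_le_mul_of_nonneg_right hu hn0
    _ = n := one_mul n
  have htri : ‖(-4 * g ^ 2 * r) • u + (-2 * g ^ 2 * ‖u‖ ^ 2 + 8 * g ^ 3 * r ^ 2) • v‖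
      ≤ |(-4 * g ^ 2 * r)| * ‖u‖ + |(-2 * g ^ 2 * ‖u‖ ^ 2 + 8 * g ^ 3 * r ^ 2)| * n := by
    calc ‖(-4 * g ^ 2 * r) • u + (-2 * g ^ 2 * ‖u‖ ^ 2 + 8 * g ^ 3 * r ^ 2) • v‖
        ≤ ‖(-4 * g ^ 2 * r) • u‖ + ‖(-2 * g ^ 2 * ‖u‖ ^ 2 + 8 * g ^ 3 * r ^ 2) • v‖ :=
          norm_add_le _ _
      _ = |(-4 * g ^ 2 * r)| * ‖u‖ + |(-2 * g ^ 2 * ‖u‖ ^ 2 + 8 * g ^ 3 * r ^ 2)| * n := by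
          rw [norm_smul, norm_smul, Real.norm_eq_abs, Real.norm_eq_abs, hndef]
  refine htri.trans ?_
  have habs1 : |(-4 * g ^ 2 * r)| ≤ 4 * g ^ 2 * n := by
    rw [abs_mul]
    have : |(-4 * g ^ 2)| = 4 * g ^ 2 := by rw [abs_of_nonpos (by nlinarith)]; ring
    rw [this]
    nlinarith [abs_nonneg r]
  have habs2 : |(-2 * g ^ 2 * ‖u‖ ^ 2 + 8 * g ^ 3 * r ^ 2)| ≤ 2 * g ^ 2 + 8 * g ^ 3 * n ^ 2 := by
    have h1 : ‖u‖ ^ 2 ≤ 1 := by nlinarith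
    have h2 : r ^ 2 ≤ n ^ 2 := by nlinarith [abs_nonneg r, sq_abs r]
    have hg3 : (0:ℝ) ≤ g ^ 3 := by positivity
    have hg2 : (0:ℝ) ≤ g ^ 2 := by positivity
    rw [abs_le]
    constructor
    · nlinarith [mul_le_mul_of_nonneg_left h1 (by positivity : (0:ℝ) ≤ 2 * g ^ 2),
        mul_nonneg hg3 (sq_nonneg r), mul_nonneg hg3 (sq_nonneg n)]
    · nlinarith [mul_nonneg hg2 (sq_nonneg ‖u‖), mul_le_mul_of_nonneg_left h2 hg3]
  have hT : |(-4 * g ^ 2 * r)| * ‖u‖ + |(-2 * g ^ 2 * ‖u‖ ^ 2 + 8 * g ^ 3 * r ^ 2)| * n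
      ≤ 6 * g ^ 2 * n + 8 * g ^ 3 * n ^ 3 := by
    have e1 : |(-4 * g ^ 2 * r)| * ‖u‖ ≤ 4 * g ^ 2 * n :=
      (mul_le_of_le_one_right (abs_nonneg _) hu).trans habs1
    have e2 : |(-2 * g ^ 2 * ‖u‖ ^ 2 + 8 * g ^ 3 * r ^ 2)| * n
        ≤ (2 * g ^ 2 + 8 * g ^ 3 * n ^ 2) * n := mul_le_mul_of_nonneg_right habs2 hn0
    nlinarith [e1, e2]
  have hg2le : g ^ 2 ≤ 1 := by nlinarith
  rcases min_cases 1 n with ⟨hmin, hcase⟩ | ⟨hmin, hcase⟩ <;> rw [hmin]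
  · -- 1 ≤ n
    have hgn : g * n ≤ 1 / 2 := by linarith
    have e3 : g ^ 2 * n ≤ 1 / 2 := by nlinarith [mul_le_mul_of_nonneg_left hgn hgpos.le]
    have e4 : 8 * g ^ 3 * n ^ 3 ≤ 1 := by
      have h8 : (2 * (g * n)) ^ 3 ≤ 1 := by
        have := pow_le_one₀ (by positivity : (0:ℝ) ≤ 2 * (g * n)) h2gn (n := 3)
        simpa using this
      nlinarith [h8]
    nlinarith [e3, e4, hT]
  · -- n < 1
    have e3 : g ^ 2 * n ≤ n := by nlinarith [mul_le_mul_of_nonneg_right hg2le hn0]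
    have e4 : 8 * g ^ 3 * n ^ 3 ≤ 8 * n := by
      have h1 : g ^ 3 * n ^ 2 ≤ 1 := by nlinarith [mul_le_mul hg2le hgn2 (by positivity) zero_le_one]
      nlinarith [mul_le_mul_of_nonneg_right h1 hn0]
    nlinarith [e3, e4, hT]
end

section
/- Let d ∈ ℕ and define the taming map ψ : ℝ^d → ℝ^d by ψ(v) = v/(1 + ‖v‖²). Then for every z ∈ ℝ^d it holds that ‖ψ'(z) − Id_{ℝ^d}‖_{L(ℝ^d)} ≤ 3‖z‖²/(1 + ‖z‖²). -/
lemma tamingMap_hasFDerivAt (d : ℕ) (z : EuclideanSpace ℝ (Fin d)) :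
    HasFDerivAt (tamingMap d)
      ((1 + ‖z‖ ^ 2)⁻¹ • ContinuousLinearMap.id ℝ (EuclideanSpace ℝ (Fin d)) +
        ((-((1 + ‖z‖ ^ 2) ^ 2)⁻¹) • (2 • (innerSL ℝ z))).smulRight z) z := by
  have hc : HasFDerivAt (fun v : EuclideanSpace ℝ (Fin d) => 1 + ‖v‖ ^ 2)
      (2 • (innerSL ℝ z)) z := by
    simpa using (hasFDerivAt_id z).norm_sq.const_add 1
  have hne : (1 + ‖z‖ ^ 2) ≠ 0 := by positivity
  have hinv : HasFDerivAt (fun v : EuclideanSpace ℝ (Fin d) => (1 + ‖v‖ ^ 2)⁻¹)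
      ((-((1 + ‖z‖ ^ 2) ^ 2)⁻¹) • (2 • (innerSL ℝ z))) z :=
    (hasDerivAt_inv hne).comp_hasFDerivAt z hc
  exact hinv.smul (hasFDerivAt_id z)

/-- `‖ψ'(z) − Id‖ ≤ 3‖z‖²/(1 + ‖z‖²)` for the taming map `ψ`. -/
theorem tamingMap_fderiv_sub_id_norm_le_div (d : ℕ) (z : EuclideanSpace ℝ (Fin d)) :
    ‖fderiv ℝ (tamingMap d) z - ContinuousLinearMap.id ℝ (EuclideanSpace ℝ (Fin d))‖
      ≤ 3 * ‖z‖ ^ 2 / (1 + ‖z‖ ^ 2) := by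
  have hd := tamingMap_hasFDerivAt d z
  rw [hd.fderiv]
  set a := ‖z‖ ^ 2 with ha
  have ha0 : 0 ≤ a := by positivity
  have hc : (0:ℝ) < 1 + a := by positivity
  apply ContinuousLinearMap.opNorm_le_bound _ (by positivity)
  intro x
  have hx : ((1 + a)⁻¹ • ContinuousLinearMap.id ℝ (EuclideanSpace ℝ (Fin d)) +
        ((-((1 + a) ^ 2)⁻¹) • (2 • (innerSL ℝ z))).smulRight z -
        ContinuousLinearMap.id ℝ (EuclideanSpace ℝ (Fin d))) x
      = ((1 + a)⁻¹ - 1) • x + ((-((1 + a) ^ 2)⁻¹) * (2 * inner ℝ z x)) • z := by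
    simp only [ContinuousLinearMap.sub_apply, ContinuousLinearMap.add_apply,
      ContinuousLinearMap.smul_apply, ContinuousLinearMap.id_apply,
      ContinuousLinearMap.smulRight_apply, ContinuousLinearMap.smul_apply,
      smul_eq_mul, innerSL_apply_apply]
    module
  rw [hx]
  have h1 : ‖((1 + a)⁻¹ - 1) • x‖ ≤ (a / (1 + a)) * ‖x‖ := by
    rw [norm_smul]
    gcongr
    have heq : (1 + a)⁻¹ - 1 = -(a / (1 + a)) := by field_simp; ring
    rw [Real.norm_eq_abs, heq, abs_neg, abs_of_nonneg (by positivity)]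
  have h2 : ‖((-((1 + a) ^ 2)⁻¹) * (2 * inner ℝ z x)) • z‖ ≤ (2 * a / (1 + a)) * ‖x‖ := by
    rw [norm_smul, Real.norm_eq_abs, abs_mul, abs_neg, abs_inv, abs_mul]
    have hinner : |(inner ℝ z x : ℝ)| ≤ ‖z‖ * ‖x‖ := abs_real_inner_le_norm z x
    have hzsq : ‖z‖ * ‖z‖ = a := by rw [ha]; ring
    have hle : |((1 + a) ^ 2)|⁻¹ * (|2| * |(inner ℝ z x : ℝ)|) * ‖z‖
        ≤ ((1 + a) ^ 2)⁻¹ * (2 * (‖z‖ * ‖x‖)) * ‖z‖ := by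
      rw [abs_of_pos (by positivity), abs_two]
      gcongr
    refine hle.trans ?_
    have : ((1 + a) ^ 2)⁻¹ * (2 * (‖z‖ * ‖x‖)) * ‖z‖ = 2 * a / (1 + a)^2 * ‖x‖ := by
      rw [← hzsq]; field_simp
    rw [this]
    have hstep : 2 * a / (1 + a) ^ 2 ≤ 2 * a / (1 + a) := by
      apply div_le_div_of_nonneg_left (by positivity) hc
      nlinarith
    exact mul_le_mul_of_nonneg_right hstep (norm_nonneg x)
  calc ‖((1 + a)⁻¹ - 1) • x + ((-((1 + a) ^ 2)⁻¹) * (2 * inner ℝ z x)) • z‖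
      ≤ ‖((1 + a)⁻¹ - 1) • x‖ + ‖((-((1 + a) ^ 2)⁻¹) * (2 * inner ℝ z x)) • z‖ := norm_add_le _ _
    _ ≤ (a / (1 + a)) * ‖x‖ + (2 * a / (1 + a)) * ‖x‖ := add_le_add h1 h2
    _ = 3 * a / (1 + a) * ‖x‖ := by ring
end

section
/- Let d ∈ ℕ and define the taming map ψ : ℝ^d → ℝ^d by ψ(v) = v/(1 + ‖v‖²). Then for every z ∈ ℝ^d and every u ∈ ℝ^d with ‖u‖ ≤ 1 it holds that ‖ψ''(z)(u, u)‖ ≤ 14‖z‖/(1 + ‖z‖²)². -/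
open ContinuousLinearMap
open scoped RealInnerProductSpace

variable {E : Type*} [NormedAddCommGroup E] [InnerProductSpace ℝ E]

noncomputable def Gd (z : E) : E →L[ℝ] E :=
  (1 + ‖z‖ ^ 2)⁻¹ • ContinuousLinearMap.id ℝ E +
    (-2 * ((1 + ‖z‖ ^ 2) ^ 2)⁻¹) • ((innerSL ℝ z).smulRight z)

theorem fderiv_psi_eq : fderiv ℝ (fun v : E => (1 + ‖v‖ ^ 2)⁻¹ • v) = Gd := by
  funext z
  have hn : HasFDerivAt (fun v : E => 1 + ‖v‖ ^ 2)
      (2 • (innerSL ℝ z).comp (ContinuousLinearMap.id ℝ E)) z := by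
    simpa using ((hasFDerivAt_id z).norm_sq).const_add 1
  have hpos : (1 + ‖z‖ ^ 2) ≠ 0 := by positivity
  have hc : HasFDerivAt (fun v : E => (1 + ‖v‖ ^ 2)⁻¹)
      ((-((1 + ‖z‖ ^ 2) ^ 2)⁻¹) • (2 • (innerSL ℝ z).comp (ContinuousLinearMap.id ℝ E))) z :=
    (hasDerivAt_inv hpos).comp_hasFDerivAt z hn
  have hpsi : HasFDerivAt (fun v : E => (1 + ‖v‖ ^ 2)⁻¹ • v) _ z := hc.smul (hasFDerivAt_id z)
  rw [hpsi.fderiv]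
  ext u
  simp [Gd, smul_smul]
  ring_nf

lemma smulRightL_apply' (c : E →L[ℝ] ℝ) (f v : E) :
    ContinuousLinearMap.smulRightL ℝ E E c f v = c v • f := rfl

theorem Gd_deriv_apply (z u : E) :
    fderiv ℝ (Gd (E := E)) z u u =
      (-4 * (((1 + ‖z‖ ^ 2) ^ 2)⁻¹) * ⟪z, u⟫) • u +
      (8 * (((1 + ‖z‖ ^ 2) ^ 3)⁻¹) * ⟪z, u⟫ ^ 2
        - 2 * (((1 + ‖z‖ ^ 2) ^ 2)⁻¹) * ‖u‖ ^ 2) • z := by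
  have hpos : (1 + ‖z‖ ^ 2) ≠ 0 := by positivity
  have hn : HasFDerivAt (fun v : E => 1 + ‖v‖ ^ 2)
      (2 • (innerSL ℝ z).comp (ContinuousLinearMap.id ℝ E)) z := by
    simpa using ((hasFDerivAt_id z).norm_sq).const_add 1
  have hc : HasFDerivAt (fun v : E => (1 + ‖v‖ ^ 2)⁻¹)
      ((-((1 + ‖z‖ ^ 2) ^ 2)⁻¹) • (2 • (innerSL ℝ z).comp (ContinuousLinearMap.id ℝ E))) z :=
    (hasDerivAt_inv hpos).comp_hasFDerivAt z hn
  have hG1 : HasFDerivAt (fun z : E => (1 + ‖z‖ ^ 2)⁻¹ • ContinuousLinearMap.id ℝ E) _ z :=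
    hc.smul_const (ContinuousLinearMap.id ℝ E)
  have hq : HasDerivAt (fun y : ℝ => -2 * (y ^ 2)⁻¹) _ (1 + ‖z‖ ^ 2) :=
    ((hasDerivAt_pow 2 (1 + ‖z‖ ^ 2)).inv (c := fun y : ℝ => y ^ 2) (pow_ne_zero 2 hpos)).const_mul (-2)
  have hs : HasFDerivAt (fun z : E => -2 * ((1 + ‖z‖ ^ 2) ^ 2)⁻¹) _ z :=
    hq.comp_hasFDerivAt (h₂ := fun y : ℝ => -2 * (y ^ 2)⁻¹) (f := fun v : E => 1 + ‖v‖ ^ 2) z hn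
  have hB : HasFDerivAt (fun z : E => ((smulRightL ℝ E E).comp (innerSL ℝ)) z)
      ((smulRightL ℝ E E).comp (innerSL ℝ)) z :=
    (((smulRightL ℝ E E).comp (innerSL ℝ))).hasFDerivAt
  have hM : HasFDerivAt (fun z : E => (innerSL ℝ z).smulRight z) _ z :=
    hB.clm_apply (hasFDerivAt_id z)
  have hG : HasFDerivAt (Gd (E := E)) _ z := hG1.add (hs.smul hM)
  rw [hG.fderiv]
  set_option synthInstance.maxHeartbeats 200000 in
  simp [smul_smul, real_inner_self_eq_norm_sq, smulRightL_apply']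
  match_scalars <;> field_simp <;> ring

theorem psi_bound (z u : E) (hu : ‖u‖ ≤ 1) :
    ‖fderiv ℝ (fderiv ℝ (fun v : E => (1 + ‖v‖ ^ 2)⁻¹ • v)) z u u‖ ≤
      14 * ‖z‖ / (1 + ‖z‖ ^ 2) ^ 2 := by
  rw [fderiv_psi_eq, Gd_deriv_apply]
  set r := ‖z‖ with hr
  set s := ‖u‖ with hs
  set t : ℝ := ⟪z, u⟫ with htt
  have hr0 : 0 ≤ r := norm_nonneg z
  have hs0 : 0 ≤ s := norm_nonneg u
  have ht : |t| ≤ r * s := abs_real_inner_le_norm z u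
  have hn0 : (0:ℝ) < 1 + r ^ 2 := by positivity
  set iN : ℝ := (1 + r ^ 2)⁻¹ with hiNdef
  have hiN : 0 < iN := by positivity
  have hiN1 : iN * (1 + r ^ 2) = 1 := inv_mul_cancel₀ (ne_of_gt hn0)
  have hts : |t| * s ≤ r := by nlinarith [abs_nonneg t]
  have ht2 : t ^ 2 ≤ r ^ 2 := by nlinarith [abs_nonneg t, sq_abs t]
  have hr2 : iN * r ^ 2 ≤ 1 := by nlinarith
  have e2 : ((1 + r ^ 2) ^ 2)⁻¹ = iN ^ 2 := by rw [hiNdef, inv_pow]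
  have e3 : ((1 + r ^ 2) ^ 3)⁻¹ = iN ^ 3 := by rw [hiNdef, inv_pow]
  calc ‖(-4 * ((1 + r ^ 2) ^ 2)⁻¹ * t) • u +
        (8 * ((1 + r ^ 2) ^ 3)⁻¹ * t ^ 2 - 2 * ((1 + r ^ 2) ^ 2)⁻¹ * s ^ 2) • z‖
      ≤ ‖(-4 * ((1 + r ^ 2) ^ 2)⁻¹ * t) • u‖ +
        ‖(8 * ((1 + r ^ 2) ^ 3)⁻¹ * t ^ 2 - 2 * ((1 + r ^ 2) ^ 2)⁻¹ * s ^ 2) • z‖ :=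
        norm_add_le _ _
    _ = |(-4 * iN ^ 2 * t)| * s + |(8 * iN ^ 3 * t ^ 2 - 2 * iN ^ 2 * s ^ 2)| * r := by
        rw [norm_smul, norm_smul, Real.norm_eq_abs, Real.norm_eq_abs, e2, e3]
    _ ≤ 4 * iN ^ 2 * |t| * s + (8 * iN ^ 3 * t ^ 2 + 2 * iN ^ 2 * s ^ 2) * r := by
        gcongr ?_ + ?_ * r
        · rw [abs_mul, abs_mul]
          have : |(-4 : ℝ)| = 4 := by norm_num
          rw [this, abs_of_pos (by positivity : (0:ℝ) < iN ^ 2)]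
        · exact (abs_sub _ _).trans (by
            rw [abs_of_nonneg (by positivity), abs_of_nonneg (by positivity)])
    _ ≤ 14 * r * iN ^ 2 := by
        have k1 : 4 * iN ^ 2 * |t| * s ≤ 4 * iN ^ 2 * r := by
          have := mul_le_mul_of_nonneg_left hts (by positivity : (0:ℝ) ≤ 4 * iN ^ 2)
          nlinarith
        have k2 : 8 * iN ^ 3 * t ^ 2 * r ≤ 8 * iN ^ 2 * r := by
          have h3 : iN * t ^ 2 ≤ 1 := by nlinarith
          nlinarith [mul_nonneg (mul_nonneg (by positivity : (0:ℝ) ≤ 8 * iN ^ 2) hr0) (sub_nonneg.2 h3)]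
        have hs2 : s ^ 2 ≤ 1 := by nlinarith
        have k3 : 2 * iN ^ 2 * s ^ 2 * r ≤ 2 * iN ^ 2 * r := by
          nlinarith [mul_nonneg (mul_nonneg (by positivity : (0:ℝ) ≤ 2 * iN ^ 2) hr0) (sub_nonneg.2 hs2)]
        nlinarith
    _ = 14 * r / (1 + r ^ 2) ^ 2 := by rw [div_eq_mul_inv, inv_pow]



/-- `‖ψ''(z)(u, u)‖ ≤ 14‖z‖/(1 + ‖z‖²)²` for the taming map `ψ` and all `u` with `‖u‖ ≤ 1`. -/
theorem tamingMap_second_fderiv_bound_div (d : ℕ) (z u : EuclideanSpace ℝ (Fin d))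
    (hu : ‖u‖ ≤ 1) :
    ‖fderiv ℝ (fderiv ℝ (tamingMap d)) z u u‖ ≤ 14 * ‖z‖ / (1 + ‖z‖ ^ 2) ^ 2 := by
  have h1 : tamingMap d = fun v => (1 + ‖v‖ ^ 2)⁻¹ • v := rfl
  rw [h1]
  exact psi_bound z u hu
end

section
/- Let d, m ∈ ℕ, let ψ : ℝ^d → ℝ^d be the taming map ψ(v) = v/(1 + ‖v‖²), let φ : ℝ^d → ℝ and let μ : ℝ^d → ℝ^d satisfy ‖μ(a) − μ(b)‖ ≤ (φ(a) + φ(b))·‖a − b‖ for all a, b ∈ ℝ^d. Let y, z ∈ ℝ^d, let S : ℝ^m → ℝ^d be a linear map, let e_1, …, e_m be the standard orthonormal basis of ℝ^m, and set w = y + ψ(z). Then ‖ψ'(z)(μ(y)) + (1/2)·Σ_{j=1}^m ψ''(z)(S e_j, S e_j) − μ(w)‖ ≤ ‖z‖·( 3‖μ(y)‖ + 7‖S‖²_HS + |φ(w) + φ(y)| ). -/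
/-- The Hilbert–Schmidt (Frobenius) norm of a linear map `ℝ^m → ℝ^d`, computed via the
standard orthonormal basis of `ℝ^m`. -/
noncomputable def hsNorm {m d : ℕ}
    (S : EuclideanSpace ℝ (Fin m) →L[ℝ] EuclideanSpace ℝ (Fin d)) : ℝ :=
  Real.sqrt (∑ j : Fin m, ‖S (EuclideanSpace.single j (1 : ℝ))‖ ^ 2)

open RealInnerProductSpace

noncomputable section TamedAux

variable {E : Type*} [NormedAddCommGroup E] [InnerProductSpace ℝ E]

/-- The Fréchet derivative of the taming map at `z`. -/
noncomputable def tamD (z : E) : E →L[ℝ] E :=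
  (1 + ‖z‖ ^ 2)⁻¹ • ContinuousLinearMap.id ℝ E +
    ((-2 * ((1 + ‖z‖ ^ 2)⁻¹) ^ 2) • innerSL ℝ z).smulRight z

lemma hasFDerivAt_inv_one_add_sq (z : E) :
    HasFDerivAt (fun v : E => (1 + ‖v‖ ^ 2)⁻¹)
      ((-2 * ((1 + ‖z‖ ^ 2)⁻¹) ^ 2) • innerSL ℝ z) z := by
  have h1 : (0:ℝ) < 1 + ‖z‖ ^ 2 := by positivity
  have hg : HasFDerivAt (fun v : E => 1 + ‖v‖ ^ 2) (2 • innerSL ℝ z) z := by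
    simpa using (hasFDerivAt_const (1:ℝ) z).fun_add (hasStrictFDerivAt_norm_sq z).hasFDerivAt
  have hinv := (hasDerivAt_inv h1.ne').comp_hasFDerivAt z hg
  refine hinv.congr_fderiv ?_
  ext k
  simp [inv_pow]
  ring

lemma hasFDerivAt_taming (z : E) :
    HasFDerivAt (fun v : E => (1 + ‖v‖ ^ 2)⁻¹ • v) (tamD z) z := by
  simpa [tamD] using (hasFDerivAt_inv_one_add_sq z).fun_smul (hasFDerivAt_id z)

lemma tamD_apply (z h : E) :
    tamD z h = (1 + ‖z‖ ^ 2)⁻¹ • h + (-2 * ((1 + ‖z‖ ^ 2)⁻¹) ^ 2 * ⟪z, h⟫) • z := by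
  simp [tamD]

lemma differentiableAt_tamD (z : E) : DifferentiableAt ℝ (tamD (E := E)) z := by
  have dinv : DifferentiableAt ℝ (fun v : E => (1 + ‖v‖ ^ 2)⁻¹) z :=
    (hasFDerivAt_inv_one_add_sq z).differentiableAt
  have d1 : DifferentiableAt ℝ (fun v : E => (1 + ‖v‖ ^ 2)⁻¹ • ContinuousLinearMap.id ℝ E) z :=
    dinv.smul (differentiableAt_const _)
  have dstuff : DifferentiableAt ℝ
      (fun v : E => (-2 * ((1 + ‖v‖ ^ 2)⁻¹) ^ 2) • innerSL ℝ v) z :=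
    (((dinv.pow 2).const_mul (-2)).smul ((innerSL ℝ : E →L[ℝ] E →L[ℝ] ℝ).differentiableAt))
  have d2 : DifferentiableAt ℝ
      (fun v : E => ((-2 * ((1 + ‖v‖ ^ 2)⁻¹) ^ 2) • innerSL ℝ v).smulRight v) z := by
    have hc : DifferentiableAt ℝ (fun v : E => ContinuousLinearMap.smulRightL ℝ E E
        ((-2 * ((1 + ‖v‖ ^ 2)⁻¹) ^ 2) • innerSL ℝ v)) z :=
      DifferentiableAt.comp (g := ⇑(ContinuousLinearMap.smulRightL ℝ E E)) z
        (ContinuousLinearMap.differentiableAt _) dstuff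
    have := hc.clm_apply differentiableAt_fun_id
    exact this
  exact d1.add d2

lemma fderiv_tamD_apply (z h : E) :
    fderiv ℝ (fun v : E => tamD v h) z h =
      (-4 * ((1 + ‖z‖ ^ 2)⁻¹) ^ 2 * ⟪z, h⟫) • h +
        (8 * ((1 + ‖z‖ ^ 2)⁻¹) ^ 3 * ⟪z, h⟫ ^ 2 - 2 * ((1 + ‖z‖ ^ 2)⁻¹) ^ 2 * ‖h‖ ^ 2) • z := by
  have hfun : (fun v : E => tamD v h)
      = fun v : E => (1 + ‖v‖ ^ 2)⁻¹ • h
          + (-2 * ((1 + ‖v‖ ^ 2)⁻¹) ^ 2 * ⟪h, v⟫) • v :=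
    funext fun v => by rw [tamD_apply, real_inner_comm]
  have hinv := hasFDerivAt_inv_one_add_sq z
  have e1 : HasFDerivAt (fun v : E => (1 + ‖v‖ ^ 2)⁻¹ • h)
      (((-2 * ((1 + ‖z‖ ^ 2)⁻¹) ^ 2) • innerSL ℝ z).smulRight h) z :=
    hinv.smul_const h
  have hinner : HasFDerivAt (fun v : E => ⟪h, v⟫) (innerSL ℝ h) z :=
    (innerSL ℝ h).hasFDerivAt
  have hp : HasFDerivAt (fun v : E => ((1 + ‖v‖ ^ 2)⁻¹) ^ 2)
      ((1 + ‖z‖ ^ 2)⁻¹ • ((-2 * ((1 + ‖z‖ ^ 2)⁻¹) ^ 2) • innerSL ℝ z)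
        + (1 + ‖z‖ ^ 2)⁻¹ • ((-2 * ((1 + ‖z‖ ^ 2)⁻¹) ^ 2) • innerSL ℝ z)) z := by
    have := hinv.fun_mul hinv
    simpa [pow_two] using this
  have hid : HasFDerivAt (fun v : E => v) (ContinuousLinearMap.id ℝ E) z := hasFDerivAt_id z
  have hs := ((hp.const_mul (-2)).fun_mul hinner).fun_smul hid
  have H := (e1.fun_add hs)
  rw [hfun, H.fderiv]
  simp only [ContinuousLinearMap.add_apply, ContinuousLinearMap.smulRight_apply,
    ContinuousLinearMap.smul_apply, innerSL_apply_apply, ContinuousLinearMap.coe_smul',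
    Pi.smul_apply, ContinuousLinearMap.coe_id', id_eq, smul_eq_mul]
  rw [real_inner_comm h z, real_inner_self_eq_norm_sq]
  match_scalars <;> ring

/-- First-order error bound. -/
lemma norm_tamD_sub_le (z a : E) : ‖tamD z a - a‖ ≤ 3 * ‖z‖ * ‖a‖ := by
  have h1 : (0:ℝ) < 1 + ‖z‖ ^ 2 := by positivity
  set f : ℝ := (1 + ‖z‖ ^ 2)⁻¹ with hf
  have hf1 : f * (1 + ‖z‖ ^ 2) = 1 := inv_mul_cancel₀ h1.ne'
  have hf0 : 0 ≤ f := by positivity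
  have hfle : f ≤ 1 := by
    rw [hf]
    apply inv_le_one_of_one_le₀
    nlinarith [sq_nonneg ‖z‖]
  have hfr : f * ‖z‖ ≤ 1 := by nlinarith [sq_nonneg (‖z‖ - 1)]
  have heq : tamD z a - a = (f - 1) • a + (-2 * f ^ 2 * ⟪z, a⟫) • z := by
    rw [tamD_apply]; module
  have ht : |⟪z, a⟫| ≤ ‖z‖ * ‖a‖ := abs_real_inner_le_norm z a
  calc ‖tamD z a - a‖ ≤ ‖(f - 1) • a‖ + ‖(-2 * f ^ 2 * ⟪z, a⟫) • z‖ := by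
        rw [heq]; exact norm_add_le _ _
    _ = |f - 1| * ‖a‖ + |(-2 * f ^ 2 * ⟪z, a⟫)| * ‖z‖ := by
        rw [norm_smul, norm_smul, Real.norm_eq_abs, Real.norm_eq_abs]
    _ ≤ 3 * ‖z‖ * ‖a‖ := by
        have h2 : |f - 1| = f * ‖z‖ ^ 2 := by
          rw [abs_sub_comm, abs_of_nonneg (by nlinarith)]
          nlinarith
        have h3 : |(-2 * f ^ 2 * ⟪z, a⟫)| = 2 * f ^ 2 * |⟪z, a⟫| := by
          rw [abs_mul, abs_of_nonpos (by nlinarith)]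
          ring_nf
        rw [h2, h3]
        have hA : f * ‖z‖ ^ 2 ≤ ‖z‖ := by nlinarith [norm_nonneg z]
        have hD : f ^ 2 * ‖z‖ ^ 2 ≤ ‖z‖ := by
          nlinarith [mul_le_mul_of_nonneg_right hfle (norm_nonneg z),
            mul_le_mul_of_nonneg_left hfr (mul_nonneg hf0 (norm_nonneg z))]
        nlinarith [mul_le_mul_of_nonneg_right hA (norm_nonneg a),
          mul_le_mul_of_nonneg_left ht (by positivity : (0:ℝ) ≤ 2 * f ^ 2 * ‖z‖),
          mul_le_mul_of_nonneg_right hD (norm_nonneg a),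
          norm_nonneg z, norm_nonneg a, abs_nonneg ⟪z, a⟫, hf0]

/-- Second-order term bound. -/
lemma norm_second_le (z h : E) :
    ‖fderiv ℝ (fun v : E => tamD v h) z h‖ ≤ 14 * ‖z‖ * ‖h‖ ^ 2 := by
  have h1 : (0:ℝ) < 1 + ‖z‖ ^ 2 := by positivity
  set f : ℝ := (1 + ‖z‖ ^ 2)⁻¹ with hf
  have hf1 : f * (1 + ‖z‖ ^ 2) = 1 := inv_mul_cancel₀ h1.ne'
  have hf0 : 0 ≤ f := by positivity
  have hfle : f ≤ 1 := by
    rw [hf]; apply inv_le_one_of_one_le₀; nlinarith [sq_nonneg ‖z‖]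
  have hfr2 : f * ‖z‖ ^ 2 ≤ 1 := by nlinarith
  have ht : |⟪z, h⟫| ≤ ‖z‖ * ‖h‖ := abs_real_inner_le_norm z h
  have ht2 : ⟪z, h⟫ ^ 2 ≤ ‖z‖ ^ 2 * ‖h‖ ^ 2 := by
    nlinarith [abs_nonneg ⟪z, h⟫, sq_abs ⟪z, h⟫, norm_nonneg z, norm_nonneg h]
  rw [fderiv_tamD_apply]
  calc ‖(-4 * f ^ 2 * ⟪z, h⟫) • h + (8 * f ^ 3 * ⟪z, h⟫ ^ 2 - 2 * f ^ 2 * ‖h‖ ^ 2) • z‖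
      ≤ |(-4 * f ^ 2 * ⟪z, h⟫)| * ‖h‖ + |8 * f ^ 3 * ⟪z, h⟫ ^ 2 - 2 * f ^ 2 * ‖h‖ ^ 2| * ‖z‖ := by
        refine le_trans (norm_add_le _ _) ?_
        rw [norm_smul, norm_smul, Real.norm_eq_abs, Real.norm_eq_abs]
    _ ≤ (4 * f ^ 2 * (‖z‖ * ‖h‖)) * ‖h‖
        + (8 * f ^ 3 * (‖z‖ ^ 2 * ‖h‖ ^ 2) + 2 * f ^ 2 * ‖h‖ ^ 2) * ‖z‖ := by
        gcongr ?_ * ‖h‖ + ?_ * ‖z‖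
        · have : |(-4 * f ^ 2 * ⟪z, h⟫)| = 4 * f ^ 2 * |⟪z, h⟫| := by
            rw [abs_mul, abs_of_nonpos (by nlinarith)]; ring_nf
          rw [this]
          have h4 : (0:ℝ) ≤ 4 * f ^ 2 := by positivity
          nlinarith
        · refine le_trans (abs_sub _ _) ?_
          have e1 : |8 * f ^ 3 * ⟪z, h⟫ ^ 2| = 8 * f ^ 3 * ⟪z, h⟫ ^ 2 := abs_of_nonneg (by positivity)
          have e2 : |2 * f ^ 2 * ‖h‖ ^ 2| = 2 * f ^ 2 * ‖h‖ ^ 2 := abs_of_nonneg (by positivity)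
          rw [e1, e2]
          have h8 : (0:ℝ) ≤ 8 * f ^ 3 := by positivity
          nlinarith
    _ ≤ 14 * ‖z‖ * ‖h‖ ^ 2 := by
        have hA2 : f ^ 2 ≤ 1 := by nlinarith
        have hB2 : f ^ 3 * ‖z‖ ^ 2 ≤ 1 := by nlinarith [mul_nonneg hf0 hf0]
        have hrb : (0:ℝ) ≤ ‖z‖ * ‖h‖ ^ 2 := mul_nonneg (norm_nonneg z) (sq_nonneg ‖h‖)
        nlinarith [mul_le_mul_of_nonneg_right hA2 hrb,
          mul_le_mul_of_nonneg_right hB2 hrb, norm_nonneg z, norm_nonneg h]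

end TamedAux


/-- The local drift error of the tamed scheme: if `μ` satisfies the Lipschitz-type
estimate with weight `φ` and `w = y + ψ(z)`, then
`‖ψ'(z)(μ(y)) + ½ Σⱼ ψ''(z)(S eⱼ, S eⱼ) − μ(w)‖ ≤ ‖z‖ (3‖μ(y)‖ + 7‖S‖²_HS + |φ(w) + φ(y)|)`. -/
theorem tamed_drift_local_error (d m : ℕ)
    (φ : EuclideanSpace ℝ (Fin d) → ℝ)
    (μ : EuclideanSpace ℝ (Fin d) → EuclideanSpace ℝ (Fin d))
    (hμ : ∀ a b : EuclideanSpace ℝ (Fin d), ‖μ a - μ b‖ ≤ (φ a + φ b) * ‖a - b‖)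
    (y z : EuclideanSpace ℝ (Fin d))
    (S : EuclideanSpace ℝ (Fin m) →L[ℝ] EuclideanSpace ℝ (Fin d))
    (w : EuclideanSpace ℝ (Fin d)) (hw : w = y + tamingMap d z) :
    ‖fderiv ℝ (tamingMap d) z (μ y)
        + (1 / 2 : ℝ) • (∑ j : Fin m,
            fderiv ℝ (fderiv ℝ (tamingMap d)) z (S (EuclideanSpace.single j (1 : ℝ)))
              (S (EuclideanSpace.single j (1 : ℝ))))
        - μ w‖
      ≤ ‖z‖ * (3 * ‖μ y‖ + 7 * (hsNorm S) ^ 2 + |φ w + φ y|) := by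
  classical
  have hpos : (0:ℝ) < 1 + ‖z‖ ^ 2 := by positivity
  have hψd : fderiv ℝ (tamingMap d) = tamD :=
    funext fun v => (hasFDerivAt_taming v).fderiv
  have hsecond : ∀ h : EuclideanSpace ℝ (Fin d),
      fderiv ℝ (fderiv ℝ (tamingMap d)) z h h
        = fderiv ℝ (fun v : EuclideanSpace ℝ (Fin d) => tamD v h) z h := by
    intro h
    rw [hψd]
    have key : fderiv ℝ (fun v : EuclideanSpace ℝ (Fin d) => tamD v h) z
        = (fderiv ℝ tamD z).flip h := by
      have := fderiv_clm_apply (differentiableAt_tamD z)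
        (differentiableAt_const (𝕜 := ℝ) (x := z) h)
      simpa using this
    rw [key]
    rfl
  have hsum : (∑ j : Fin m,
        fderiv ℝ (fderiv ℝ (tamingMap d)) z (S (EuclideanSpace.single j (1 : ℝ)))
          (S (EuclideanSpace.single j (1 : ℝ))))
      = ∑ j : Fin m,
        fderiv ℝ (fun v : EuclideanSpace ℝ (Fin d) => tamD v (S (EuclideanSpace.single j (1 : ℝ))))
          z (S (EuclideanSpace.single j (1 : ℝ))) :=
    Finset.sum_congr rfl fun j _ => hsecond _
  rw [hsum, hψd]
  set a : EuclideanSpace ℝ (Fin d) := μ y with ha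
  set Sig2 : EuclideanSpace ℝ (Fin d) := ∑ j : Fin m,
      fderiv ℝ (fun v : EuclideanSpace ℝ (Fin d) => tamD v (S (EuclideanSpace.single j (1 : ℝ))))
        z (S (EuclideanSpace.single j (1 : ℝ))) with hSig2
  have hX : tamD z a + (1 / 2 : ℝ) • Sig2 - μ w
      = (tamD z a - a) + (1 / 2 : ℝ) • Sig2 + (a - μ w) := by abel
  rw [hX]
  have b1 : ‖tamD z a - a‖ ≤ 3 * ‖z‖ * ‖a‖ := norm_tamD_sub_le z a
  have hhs : (hsNorm S) ^ 2 = ∑ j : Fin m, ‖S (EuclideanSpace.single j (1 : ℝ))‖ ^ 2 :=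
    Real.sq_sqrt (Finset.sum_nonneg fun j _ => sq_nonneg _)
  have b2 : ‖(1 / 2 : ℝ) • Sig2‖ ≤ 7 * ‖z‖ * (hsNorm S) ^ 2 := by
    have step1 : ‖Sig2‖ ≤ ∑ j : Fin m, 14 * ‖z‖ * ‖S (EuclideanSpace.single j (1 : ℝ))‖ ^ 2 := by
      refine le_trans (norm_sum_le _ _) (Finset.sum_le_sum fun j _ => ?_)
      exact norm_second_le z _
    have step2 : (∑ j : Fin m, 14 * ‖z‖ * ‖S (EuclideanSpace.single j (1 : ℝ))‖ ^ 2)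
        = 14 * ‖z‖ * ∑ j : Fin m, ‖S (EuclideanSpace.single j (1 : ℝ))‖ ^ 2 := by
      rw [Finset.mul_sum]
    calc ‖(1 / 2 : ℝ) • Sig2‖ = (1 / 2 : ℝ) * ‖Sig2‖ := by
          rw [norm_smul, Real.norm_eq_abs]; norm_num
      _ ≤ (1 / 2 : ℝ) * (14 * ‖z‖ * ∑ j : Fin m, ‖S (EuclideanSpace.single j (1 : ℝ))‖ ^ 2) := by
          rw [← step2]; linarith
      _ = 7 * ‖z‖ * (hsNorm S) ^ 2 := by rw [hhs]; ring
  have hyw : ‖y - w‖ ≤ ‖z‖ := by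
    have hyw0 : y - w = -(tamingMap d z) := by rw [hw]; abel
    rw [hyw0, norm_neg]
    have : tamingMap d z = (1 + ‖z‖ ^ 2)⁻¹ • z := rfl
    rw [this, norm_smul, Real.norm_eq_abs, abs_of_nonneg (by positivity)]
    have hfle : (1 + ‖z‖ ^ 2)⁻¹ ≤ 1 := inv_le_one_of_one_le₀ (by nlinarith [sq_nonneg ‖z‖])
    nlinarith [norm_nonneg z]
  have b3 : ‖a - μ w‖ ≤ |φ w + φ y| * ‖z‖ := by
    have h0 := hμ y w
    have h1 : (φ y + φ w) * ‖y - w‖ ≤ |φ w + φ y| * ‖y - w‖ := by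
      refine mul_le_mul_of_nonneg_right ?_ (norm_nonneg _)
      rw [add_comm]
      exact le_abs_self _
    have h2 : |φ w + φ y| * ‖y - w‖ ≤ |φ w + φ y| * ‖z‖ :=
      mul_le_mul_of_nonneg_left hyw (abs_nonneg _)
    exact le_trans h0 (le_trans h1 h2)
  calc ‖(tamD z a - a) + (1 / 2 : ℝ) • Sig2 + (a - μ w)‖
      ≤ ‖tamD z a - a‖ + ‖(1 / 2 : ℝ) • Sig2‖ + ‖a - μ w‖ := norm_add₃_le
    _ ≤ 3 * ‖z‖ * ‖a‖ + 7 * ‖z‖ * (hsNorm S) ^ 2 + |φ w + φ y| * ‖z‖ := by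
        linarith
    _ = ‖z‖ * (3 * ‖a‖ + 7 * (hsNorm S) ^ 2 + |φ w + φ y|) := by ring
end

section
/- Let d, m ∈ ℕ, let ψ : ℝ^d → ℝ^d be the taming map ψ(v) = v/(1 + ‖v‖²), let φ : ℝ^d → ℝ and let σ be a map from ℝ^d into the linear maps ℝ^m → ℝ^d satisfying ‖σ(a) − σ(b)‖_HS ≤ (φ(a) + φ(b))·‖a − b‖ for all a, b ∈ ℝ^d. Let y, z ∈ ℝ^d and set w = y + ψ(z). Then ‖ψ'(z) ∘ σ(y) − σ(w)‖_HS ≤ ‖z‖·( 3‖σ(y)‖_HS + |φ(w) + φ(y)| ). -/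
lemma aux_hasFDerivAt (d : ℕ) (z : EuclideanSpace ℝ (Fin d)) :
    HasFDerivAt (tamingMap d)
      ((1 + ‖z‖ ^ 2)⁻¹ • ContinuousLinearMap.id ℝ _ +
        ((-((1 + ‖z‖ ^ 2) ^ 2)⁻¹ • ((2:ℕ) • innerSL ℝ z))).smulRight z) z := by
  have h1 : HasFDerivAt (fun v : EuclideanSpace ℝ (Fin d) => 1 + ‖v‖ ^ 2)
      ((2:ℕ) • innerSL ℝ z) z := by
    simpa using ((hasFDerivAt_id z).norm_sq).const_add (1:ℝ)
  have hinv : HasDerivAt (fun t : ℝ => t⁻¹) (-((1 + ‖z‖ ^ 2) ^ 2)⁻¹) (1 + ‖z‖ ^ 2) := by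
    simpa using hasDerivAt_inv (x := 1 + ‖z‖ ^ 2) (by positivity)
  have h2 := (hinv.comp_hasFDerivAt z h1).smul (hasFDerivAt_id z)
  have h3 : tamingMap d = ((fun t : ℝ => t⁻¹) ∘ fun v : EuclideanSpace ℝ (Fin d) => 1 + ‖v‖ ^ 2) • id := by
    funext v; simp [tamingMap]
  simpa [h3, Function.comp] using h2

lemma aux_pointwise (d : ℕ) (z h : EuclideanSpace ℝ (Fin d)) :
    ‖fderiv ℝ (tamingMap d) z h - h‖ ≤ 3 * ‖z‖ * ‖h‖ := by
  rw [(aux_hasFDerivAt d z).fderiv]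
  set q : ℝ := ‖z‖ ^ 2 with hq
  have hq0 : (0:ℝ) ≤ q := sq_nonneg _
  have hD : (((1 + q)⁻¹ • ContinuousLinearMap.id ℝ (EuclideanSpace ℝ (Fin d)) +
        ((-((1 + q) ^ 2)⁻¹ • ((2:ℕ) • innerSL ℝ z))).smulRight z)) h - h
      = ((1 + q)⁻¹ - 1) • h + (-((1 + q) ^ 2)⁻¹ * (2 * (inner ℝ z h : ℝ))) • z := by
    simp [ContinuousLinearMap.smulRight_apply, sub_smul, smul_smul]
    module
  rw [hD]
  have h1 : ‖((1 + q)⁻¹ - 1) • h + (-((1 + q) ^ 2)⁻¹ * (2 * (inner ℝ z h : ℝ))) • z‖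
      ≤ |(1 + q)⁻¹ - 1| * ‖h‖ + ((1 + q) ^ 2)⁻¹ * (2 * (‖z‖ * ‖h‖)) * ‖z‖ := by
    refine (norm_add_le _ _).trans ?_
    rw [norm_smul, norm_smul]
    apply add_le_add
    · rw [Real.norm_eq_abs]
    · apply mul_le_mul_of_nonneg_right _ (norm_nonneg z)
      rw [Real.norm_eq_abs, abs_mul, abs_neg, abs_inv, abs_mul]
      have hi : |(inner ℝ z h : ℝ)| ≤ ‖z‖ * ‖h‖ := abs_real_inner_le_norm z h
      rw [abs_of_pos (show (0:ℝ) < (1 + q) ^ 2 by positivity), abs_two]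
      have hpos : (0:ℝ) ≤ ((1 + q) ^ 2)⁻¹ := by positivity
      exact mul_le_mul_of_nonneg_left
        (mul_le_mul_of_nonneg_left hi (by norm_num)) hpos
  refine h1.trans ?_
  have habs : |(1 + q)⁻¹ - 1| = q * (1 + q)⁻¹ := by
    rw [abs_of_nonpos, neg_sub]
    · field_simp; ring
    · have : (1 + q)⁻¹ ≤ 1 := by
        rw [inv_le_one_iff₀]; right; linarith
      linarith
  rw [habs]
  have hz1 : q * (1 + q)⁻¹ ≤ ‖z‖ := by
    rw [mul_inv_le_iff₀ (by positivity), hq]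
    nlinarith [sq_nonneg (‖z‖ - 1), norm_nonneg z]
  have hz2 : ((1 + q) ^ 2)⁻¹ * (2 * (‖z‖ * ‖h‖)) * ‖z‖ ≤ 2 * ‖z‖ * ‖h‖ := by
    have : ((1 + q) ^ 2)⁻¹ * ‖z‖ ≤ 1 := by
      rw [inv_mul_le_iff₀ (by positivity), hq]
      nlinarith [sq_nonneg (‖z‖ - 1), norm_nonneg z, sq_nonneg ‖z‖, sq_nonneg (‖z‖^2)]
    have h6 := mul_le_mul_of_nonneg_right this
      (show (0:ℝ) ≤ 2 * ‖z‖ * ‖h‖ by positivity)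
    nlinarith [h6]
  nlinarith [norm_nonneg h, norm_nonneg z]

lemma aux_sqrt_sum_le {m : ℕ} (x u v : Fin m → ℝ) (h : ∀ j, |x j| ≤ u j + v j)
    (hu : ∀ j, 0 ≤ u j) (hv : ∀ j, 0 ≤ v j) :
    Real.sqrt (∑ j, x j ^ 2) ≤ Real.sqrt (∑ j, u j ^ 2) + Real.sqrt (∑ j, v j ^ 2) := by
  have h1 : Real.sqrt (∑ j, x j ^ 2) ≤ Real.sqrt (∑ j, (u j + v j) ^ 2) := by
    apply Real.sqrt_le_sqrt
    apply Finset.sum_le_sum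
    intro j _
    calc x j ^ 2 = |x j| ^ 2 := (sq_abs _).symm
      _ ≤ (u j + v j) ^ 2 := by
          apply pow_le_pow_left₀ (abs_nonneg _) (h j)
  refine h1.trans ?_
  have hU : Real.sqrt (∑ j, u j ^ 2) = ‖(WithLp.equiv 2 (Fin m → ℝ)).symm u‖ := by
    rw [EuclideanSpace.norm_eq]; congr 1; apply Finset.sum_congr rfl; intro j _
    simp [Real.norm_eq_abs, sq_abs]
  have hV : Real.sqrt (∑ j, v j ^ 2) = ‖(WithLp.equiv 2 (Fin m → ℝ)).symm v‖ := by
    rw [EuclideanSpace.norm_eq]; congr 1; apply Finset.sum_congr rfl; intro j _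
    simp [Real.norm_eq_abs, sq_abs]
  have hUV : Real.sqrt (∑ j, (u j + v j) ^ 2)
      = ‖(WithLp.equiv 2 (Fin m → ℝ)).symm u + (WithLp.equiv 2 (Fin m → ℝ)).symm v‖ := by
    rw [EuclideanSpace.norm_eq]; congr 1; apply Finset.sum_congr rfl; intro j _
    simp [Real.norm_eq_abs, sq_abs, PiLp.toLp_apply]
  rw [hU, hV, hUV]
  exact norm_add_le _ _

/-- The local diffusion error of the tamed scheme: if `σ` satisfies the Lipschitz-type
estimate with weight `φ` in the Hilbert–Schmidt norm and `w = y + ψ(z)`, then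
`‖ψ'(z) ∘ σ(y) − σ(w)‖_HS ≤ ‖z‖ (3‖σ(y)‖_HS + |φ(w) + φ(y)|)`. -/
theorem tamed_diffusion_local_error (d m : ℕ)
    (φ : EuclideanSpace ℝ (Fin d) → ℝ)
    (σ : EuclideanSpace ℝ (Fin d) →
      (EuclideanSpace ℝ (Fin m) →L[ℝ] EuclideanSpace ℝ (Fin d)))
    (hσ : ∀ a b : EuclideanSpace ℝ (Fin d), hsNorm (σ a - σ b) ≤ (φ a + φ b) * ‖a - b‖)
    (y z : EuclideanSpace ℝ (Fin d))
    (w : EuclideanSpace ℝ (Fin d)) (hw : w = y + tamingMap d z) :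
    hsNorm ((fderiv ℝ (tamingMap d) z).comp (σ y) - σ w)
      ≤ ‖z‖ * (3 * hsNorm (σ y) + |φ w + φ y|) := by
  set e : Fin m → EuclideanSpace ℝ (Fin m) := fun j => EuclideanSpace.single j (1 : ℝ)
  have key : hsNorm ((fderiv ℝ (tamingMap d) z).comp (σ y) - σ w)
      ≤ Real.sqrt (∑ j, (3 * ‖z‖ * ‖σ y (e j)‖) ^ 2)
        + Real.sqrt (∑ j, ‖(σ y - σ w) (e j)‖ ^ 2) := by
    unfold hsNorm
    apply aux_sqrt_sum_le
    · intro j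
      rw [abs_of_nonneg (norm_nonneg _)]
      have : ((fderiv ℝ (tamingMap d) z).comp (σ y) - σ w) (e j)
          = (fderiv ℝ (tamingMap d) z (σ y (e j)) - σ y (e j)) + ((σ y - σ w) (e j)) := by
        simp only [ContinuousLinearMap.comp_apply, ContinuousLinearMap.sub_apply]
        abel
      rw [this]
      exact (norm_add_le _ _).trans (by gcongr; exact aux_pointwise d z _)
    · intro j; positivity
    · intro j; positivity
  have hfirst : Real.sqrt (∑ j, (3 * ‖z‖ * ‖σ y (e j)‖) ^ 2) = 3 * ‖z‖ * hsNorm (σ y) := by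
    have : ∑ j, (3 * ‖z‖ * ‖σ y (e j)‖) ^ 2
        = (3 * ‖z‖) ^ 2 * ∑ j, ‖σ y (e j)‖ ^ 2 := by
      rw [Finset.mul_sum]; apply Finset.sum_congr rfl; intro j _; ring
    rw [this, Real.sqrt_mul (by positivity), Real.sqrt_sq (by positivity)]
    rfl
  have hsecond : Real.sqrt (∑ j, ‖(σ y - σ w) (e j)‖ ^ 2) ≤ |φ w + φ y| * ‖z‖ := by
    have h2 := hσ y w
    have hyw : ‖y - w‖ = (1 + ‖z‖ ^ 2)⁻¹ * ‖z‖ := by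
      have h1 : y - w = -(tamingMap d z) := by rw [hw]; abel
      rw [h1, norm_neg, tamingMap, norm_smul, Real.norm_eq_abs,
        abs_of_pos (show (0:ℝ) < (1 + ‖z‖ ^ 2)⁻¹ by positivity)]
    have hle : (φ y + φ w) * ‖y - w‖ ≤ |φ w + φ y| * ‖z‖ := by
      rw [hyw]
      have h3 : φ y + φ w ≤ |φ w + φ y| := by
        rw [add_comm]; exact le_abs_self _
      have h4 : (1 + ‖z‖ ^ 2)⁻¹ * ‖z‖ ≤ ‖z‖ := by
        have : (1 + ‖z‖ ^ 2)⁻¹ ≤ 1 := by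
          rw [inv_le_one_iff₀]; right; nlinarith [sq_nonneg ‖z‖]
        nlinarith [norm_nonneg z]
      have h5 : (0:ℝ) ≤ (1 + ‖z‖ ^ 2)⁻¹ * ‖z‖ := by positivity
      nlinarith [abs_nonneg (φ w + φ y), norm_nonneg z]
    exact le_trans h2 hle
  calc hsNorm ((fderiv ℝ (tamingMap d) z).comp (σ y) - σ w)
      ≤ Real.sqrt (∑ j, (3 * ‖z‖ * ‖σ y (e j)‖) ^ 2)
        + Real.sqrt (∑ j, ‖(σ y - σ w) (e j)‖ ^ 2) := key
    _ ≤ 3 * ‖z‖ * hsNorm (σ y) + |φ w + φ y| * ‖z‖ := by rw [hfirst]; gcongr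
    _ = ‖z‖ * (3 * hsNorm (σ y) + |φ w + φ y|) := by ring
end

section
/- Let α, δ ∈ (0,∞), β ∈ ℝ, q ∈ [3,∞) and define μ : ℝ² → ℝ² by μ(x₁,x₂) = ( x₂²(δ + 4αx₁) − (β²/2)x₁ , −x₁x₂(δ + 4αx₁) − (β²/2)x₂ ). Then for every ε ∈ (0,∞) there exists C ∈ [0,∞) such that for all x, y ∈ ℝ² it holds that ‖μ(x) − μ(y)‖ ≤ ( C + ε(‖x‖^q + ‖y‖^q) )·‖x − y‖. -/
lemma my_coord_le (v : EuclideanSpace ℝ (Fin 2)) (i : Fin 2) : |v i| ≤ ‖v‖ := by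
  rw [EuclideanSpace.norm_eq]
  have h : ‖v i‖ ^ 2 ≤ ∑ j, ‖v j‖ ^ 2 :=
    Finset.single_le_sum (f := fun j => ‖v j‖ ^ 2) (fun j _ => by positivity) (Finset.mem_univ i)
  calc |v i| = Real.sqrt (‖v i‖ ^ 2) := by
        rw [Real.sqrt_sq (norm_nonneg _)]; exact (Real.norm_eq_abs _).symm
    _ ≤ _ := Real.sqrt_le_sqrt h

lemma my_norm_le (v : EuclideanSpace ℝ (Fin 2)) : ‖v‖ ≤ |v 0| + |v 1| := by
  rw [EuclideanSpace.norm_eq, Fin.sum_univ_two]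
  have h : ‖v 0‖ ^ 2 + ‖v 1‖ ^ 2 ≤ (|v 0| + |v 1|) ^ 2 := by
    simp only [Real.norm_eq_abs]
    nlinarith [abs_nonneg (v 0), abs_nonneg (v 1)]
  calc Real.sqrt (‖v 0‖ ^ 2 + ‖v 1‖ ^ 2) ≤ Real.sqrt ((|v 0| + |v 1|) ^ 2) :=
        Real.sqrt_le_sqrt h
    _ = |v 0| + |v 1| := Real.sqrt_sq (by positivity)

lemma my_tail (K ε q a : ℝ) (hK : 0 ≤ K) (hε : 0 < ε) (hq : 3 ≤ q) (ha : 0 ≤ a) :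
    K * a ^ 2 ≤ K * (max 1 (K / ε)) ^ 2 + ε * a ^ q := by
  set M := max 1 (K / ε) with hM
  have hM1 : (1:ℝ) ≤ M := le_max_left _ _
  have hrq : 0 ≤ ε * a ^ q := by positivity
  rcases le_or_gt a M with h | h
  · have : K * a ^ 2 ≤ K * M ^ 2 :=
      mul_le_mul_of_nonneg_left (pow_le_pow_left₀ ha h 2) hK
    linarith
  · have ha1 : (1:ℝ) ≤ a := le_trans hM1 h.le
    have hKa : K ≤ ε * a := by
      have : K / ε < a := lt_of_le_of_lt (le_max_right _ _) h
      rw [div_lt_iff₀ hε] at this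
      nlinarith
    have h3 : a ^ (3:ℝ) ≤ a ^ q := Real.rpow_le_rpow_of_exponent_le ha1 hq
    have h3' : a ^ (3:ℝ) = a ^ (3:ℕ) := by
      rw [← Real.rpow_natCast a 3]; norm_num
    have hcube : K * a ^ 2 ≤ ε * a ^ (3:ℕ) := by nlinarith
    have hKM : 0 ≤ K * M ^ 2 := by positivity
    have : ε * a ^ (3:ℝ) ≤ ε * a ^ q := mul_le_mul_of_nonneg_left h3 hε.le
    rw [h3'] at this
    linarith

lemma my_poly (δ α β a b d : ℝ) (hδ : 0 ≤ δ) (hα : 0 ≤ α)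
    (ha : 0 ≤ a) (hb : 0 ≤ b) (hd : 0 ≤ d) :
    2 * (δ * ((a + b) * d) + 4 * α * ((a ^ 2 + (a + b) * b) * d) + β ^ 2 / 2 * d)
      ≤ (2 * δ + 12 * α + β ^ 2) * (1 + a ^ 2 + b ^ 2) * d := by
  have key : (2 * δ + 12 * α + β ^ 2) * (1 + a ^ 2 + b ^ 2) * d
      - 2 * (δ * ((a + b) * d) + 4 * α * ((a ^ 2 + (a + b) * b) * d) + β ^ 2 / 2 * d)
      = d * (δ * (1 - a) ^ 2 + δ * (1 - b) ^ 2 + δ * (a ^ 2 + b ^ 2) + 12 * α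
          + 4 * α * (a - b) ^ 2 + β ^ 2 * (a ^ 2 + b ^ 2)) := by ring
  nlinarith [mul_nonneg hd (mul_nonneg hδ (sq_nonneg (1 - a))),
    mul_nonneg hd (mul_nonneg hδ (sq_nonneg (1 - b))),
    mul_nonneg hd (mul_nonneg hδ (by positivity : (0:ℝ) ≤ a ^ 2 + b ^ 2)),
    mul_nonneg hd hα,
    mul_nonneg hd (mul_nonneg hα (sq_nonneg (a - b))),
    mul_nonneg hd (mul_nonneg (sq_nonneg β) (by positivity : (0:ℝ) ≤ a ^ 2 + b ^ 2))]

/-- The drift of the experimental-psychology model satisfies: for every `ε > 0` there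
exists `C ≥ 0` with `‖μ(x) − μ(y)‖ ≤ (C + ε(‖x‖^q + ‖y‖^q))‖x − y‖` for all `x, y ∈ ℝ²`. -/
theorem experimentalPsychology_drift_local_lipschitz (α δ β q : ℝ)
    (hα : 0 < α) (hδ : 0 < δ) (hq : 3 ≤ q)
    (μ : EuclideanSpace ℝ (Fin 2) → EuclideanSpace ℝ (Fin 2))
    (hμ : ∀ x : EuclideanSpace ℝ (Fin 2),
      μ x 0 = (x 1) ^ 2 * (δ + 4 * α * x 0) - (β ^ 2 / 2) * x 0 ∧
      μ x 1 = -(x 0) * x 1 * (δ + 4 * α * x 0) - (β ^ 2 / 2) * x 1) :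
    ∀ ε : ℝ, 0 < ε → ∃ C : ℝ, 0 ≤ C ∧
      ∀ x y : EuclideanSpace ℝ (Fin 2),
        ‖μ x - μ y‖ ≤ (C + ε * (‖x‖ ^ q + ‖y‖ ^ q)) * ‖x - y‖ := by
  intro ε hε
  set K : ℝ := 2 * δ + 12 * α + β ^ 2 with hKdef
  have hK : 0 ≤ K := by positivity
  set M : ℝ := max 1 (K / ε) with hMdef
  refine ⟨K + 2 * (K * M ^ 2), by positivity, ?_⟩
  intro x y
  set a := ‖x‖ with hadef
  set b := ‖y‖ with hbdef
  set d := ‖x - y‖ with hddef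
  have ha : 0 ≤ a := norm_nonneg _
  have hb : 0 ≤ b := norm_nonneg _
  have hd : 0 ≤ d := norm_nonneg _
  have hx0 : |x 0| ≤ a := my_coord_le x 0
  have hx1 : |x 1| ≤ a := my_coord_le x 1
  have hy0 : |y 0| ≤ b := my_coord_le y 0
  have hy1 : |y 1| ≤ b := my_coord_le y 1
  have hsub : ∀ i : Fin 2, (x - y) i = x i - y i := fun i => by
    simp [PiLp.sub_apply]
  have hd0 : |x 0 - y 0| ≤ d := by rw [← hsub 0]; exact my_coord_le _ 0
  have hd1 : |x 1 - y 1| ≤ d := by rw [← hsub 1]; exact my_coord_le _ 1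
  -- component differences
  have hμsub : ∀ i : Fin 2, (μ x - μ y) i = μ x i - μ y i := fun i => by
    simp [PiLp.sub_apply]
  obtain ⟨hx0', hx1'⟩ := hμ x
  obtain ⟨hy0', hy1'⟩ := hμ y
  -- bound on |u1^2 - v1^2| etc.
  have hA : |x 1 ^ 2 - y 1 ^ 2| ≤ (a + b) * d := by
    have : x 1 ^ 2 - y 1 ^ 2 = (x 1 + y 1) * (x 1 - y 1) := by ring
    rw [this, abs_mul]
    exact mul_le_mul (le_trans (abs_add_le _ _) (add_le_add hx1 hy1)) hd1 (abs_nonneg _)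
      (by linarith)
  have hA' : |x 0 * x 1 - y 0 * y 1| ≤ (a + b) * d := by
    have : x 0 * x 1 - y 0 * y 1 = x 0 * (x 1 - y 1) + (x 0 - y 0) * y 1 := by ring
    rw [this]
    calc |x 0 * (x 1 - y 1) + (x 0 - y 0) * y 1|
        ≤ |x 0 * (x 1 - y 1)| + |(x 0 - y 0) * y 1| := abs_add_le _ _
      _ = |x 0| * |x 1 - y 1| + |x 0 - y 0| * |y 1| := by rw [abs_mul, abs_mul]
      _ ≤ a * d + d * b :=
          add_le_add (mul_le_mul hx0 hd1 (abs_nonneg _) ha)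
            (mul_le_mul hd0 hy1 (abs_nonneg _) hd)
      _ = (a + b) * d := by ring
  have hB : |x 1 ^ 2 * x 0 - y 1 ^ 2 * y 0| ≤ (a ^ 2 + (a + b) * b) * d := by
    have : x 1 ^ 2 * x 0 - y 1 ^ 2 * y 0
        = x 1 ^ 2 * (x 0 - y 0) + (x 1 ^ 2 - y 1 ^ 2) * y 0 := by ring
    rw [this]
    calc |x 1 ^ 2 * (x 0 - y 0) + (x 1 ^ 2 - y 1 ^ 2) * y 0|
        ≤ |x 1 ^ 2| * |x 0 - y 0| + |x 1 ^ 2 - y 1 ^ 2| * |y 0| := by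
          rw [← abs_mul, ← abs_mul]; exact abs_add_le _ _
      _ ≤ a ^ 2 * d + ((a + b) * d) * b := by
          have h1 : |x 1 ^ 2| ≤ a ^ 2 := by
            rw [abs_pow]; exact pow_le_pow_left₀ (abs_nonneg _) hx1 2
          gcongr
      _ = (a ^ 2 + (a + b) * b) * d := by ring
  have hB' : |x 0 ^ 2 * x 1 - y 0 ^ 2 * y 1| ≤ (a ^ 2 + (a + b) * b) * d := by
    have : x 0 ^ 2 * x 1 - y 0 ^ 2 * y 1
        = x 0 ^ 2 * (x 1 - y 1) + (x 0 ^ 2 - y 0 ^ 2) * y 1 := by ring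
    rw [this]
    calc |x 0 ^ 2 * (x 1 - y 1) + (x 0 ^ 2 - y 0 ^ 2) * y 1|
        ≤ |x 0 ^ 2| * |x 1 - y 1| + |x 0 ^ 2 - y 0 ^ 2| * |y 1| := by
          rw [← abs_mul, ← abs_mul]; exact abs_add_le _ _
      _ ≤ a ^ 2 * d + ((a + b) * d) * b := by
          have h1 : |x 0 ^ 2| ≤ a ^ 2 := by
            rw [abs_pow]; exact pow_le_pow_left₀ (abs_nonneg _) hx0 2
          have h2 : |x 0 ^ 2 - y 0 ^ 2| ≤ (a + b) * d := by
            have he : x 0 ^ 2 - y 0 ^ 2 = (x 0 + y 0) * (x 0 - y 0) := by ring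
            rw [he, abs_mul]
            exact mul_le_mul (le_trans (abs_add_le _ _) (add_le_add hx0 hy0)) hd0
              (abs_nonneg _) (by linarith)
          gcongr
      _ = (a ^ 2 + (a + b) * b) * d := by ring
  -- bound each component of μ x - μ y
  have hC0 : |μ x 0 - μ y 0|
      ≤ δ * ((a + b) * d) + 4 * α * ((a ^ 2 + (a + b) * b) * d) + β ^ 2 / 2 * d := by
    rw [hx0', hy0']
    have he : x 1 ^ 2 * (δ + 4 * α * x 0) - β ^ 2 / 2 * x 0
        - (y 1 ^ 2 * (δ + 4 * α * y 0) - β ^ 2 / 2 * y 0)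
        = δ * (x 1 ^ 2 - y 1 ^ 2) + 4 * α * (x 1 ^ 2 * x 0 - y 1 ^ 2 * y 0)
          - β ^ 2 / 2 * (x 0 - y 0) := by ring
    rw [he]
    calc |δ * (x 1 ^ 2 - y 1 ^ 2) + 4 * α * (x 1 ^ 2 * x 0 - y 1 ^ 2 * y 0)
          - β ^ 2 / 2 * (x 0 - y 0)|
        ≤ |δ * (x 1 ^ 2 - y 1 ^ 2)| + |4 * α * (x 1 ^ 2 * x 0 - y 1 ^ 2 * y 0)|
          + |β ^ 2 / 2 * (x 0 - y 0)| := abs_sub (_ + _) _ |>.trans (by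
            gcongr; exact abs_add_le _ _)
      _ ≤ δ * ((a + b) * d) + 4 * α * ((a ^ 2 + (a + b) * b) * d) + β ^ 2 / 2 * d := by
          have t1 : |δ * (x 1 ^ 2 - y 1 ^ 2)| ≤ δ * ((a + b) * d) := by
            rw [abs_mul, abs_of_pos hδ]
            exact mul_le_mul_of_nonneg_left hA hδ.le
          have t2 : |4 * α * (x 1 ^ 2 * x 0 - y 1 ^ 2 * y 0)|
              ≤ 4 * α * ((a ^ 2 + (a + b) * b) * d) := by
            rw [abs_mul, abs_of_pos (by linarith : (0:ℝ) < 4 * α)]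
            exact mul_le_mul_of_nonneg_left hB (by linarith)
          have t3 : |β ^ 2 / 2 * (x 0 - y 0)| ≤ β ^ 2 / 2 * d := by
            rw [abs_mul, abs_of_nonneg (by positivity : (0:ℝ) ≤ β ^ 2 / 2)]
            exact mul_le_mul_of_nonneg_left hd0 (by positivity)
          linarith
  have hC1 : |μ x 1 - μ y 1|
      ≤ δ * ((a + b) * d) + 4 * α * ((a ^ 2 + (a + b) * b) * d) + β ^ 2 / 2 * d := by
    rw [hx1', hy1']
    have he : -x 0 * x 1 * (δ + 4 * α * x 0) - β ^ 2 / 2 * x 1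
        - (-y 0 * y 1 * (δ + 4 * α * y 0) - β ^ 2 / 2 * y 1)
        = -(δ * (x 0 * x 1 - y 0 * y 1)) - 4 * α * (x 0 ^ 2 * x 1 - y 0 ^ 2 * y 1)
          - β ^ 2 / 2 * (x 1 - y 1) := by ring
    rw [he]
    calc |-(δ * (x 0 * x 1 - y 0 * y 1)) - 4 * α * (x 0 ^ 2 * x 1 - y 0 ^ 2 * y 1)
          - β ^ 2 / 2 * (x 1 - y 1)|
        ≤ |δ * (x 0 * x 1 - y 0 * y 1)| + |4 * α * (x 0 ^ 2 * x 1 - y 0 ^ 2 * y 1)|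
          + |β ^ 2 / 2 * (x 1 - y 1)| := by
            refine (abs_sub _ _).trans ?_
            gcongr
            refine (abs_sub _ _).trans ?_
            rw [abs_neg]
      _ ≤ δ * ((a + b) * d) + 4 * α * ((a ^ 2 + (a + b) * b) * d) + β ^ 2 / 2 * d := by
          have t1 : |δ * (x 0 * x 1 - y 0 * y 1)| ≤ δ * ((a + b) * d) := by
            rw [abs_mul, abs_of_pos hδ]
            exact mul_le_mul_of_nonneg_left hA' hδ.le
          have t2 : |4 * α * (x 0 ^ 2 * x 1 - y 0 ^ 2 * y 1)|
              ≤ 4 * α * ((a ^ 2 + (a + b) * b) * d) := by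
            rw [abs_mul, abs_of_pos (by linarith : (0:ℝ) < 4 * α)]
            exact mul_le_mul_of_nonneg_left hB' (by linarith)
          have t3 : |β ^ 2 / 2 * (x 1 - y 1)| ≤ β ^ 2 / 2 * d := by
            rw [abs_mul, abs_of_nonneg (by positivity : (0:ℝ) ≤ β ^ 2 / 2)]
            exact mul_le_mul_of_nonneg_left hd1 (by positivity)
          linarith
  have hnorm : ‖μ x - μ y‖ ≤ |μ x 0 - μ y 0| + |μ x 1 - μ y 1| := by
    have := my_norm_le (μ x - μ y)
    rwa [hμsub 0, hμsub 1] at this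
  have hpoly : ‖μ x - μ y‖ ≤ K * (1 + a ^ 2 + b ^ 2) * d := by
    refine hnorm.trans ?_
    have : |μ x 0 - μ y 0| + |μ x 1 - μ y 1|
        ≤ 2 * (δ * ((a + b) * d) + 4 * α * ((a ^ 2 + (a + b) * b) * d) + β ^ 2 / 2 * d) := by
      linarith
    refine this.trans ?_
    rw [hKdef]
    exact my_poly δ α β a b d hδ.le hα.le ha hb hd
  refine hpoly.trans ?_
  have hta : K * a ^ 2 ≤ K * M ^ 2 + ε * a ^ q := my_tail K ε q a hK hε hq ha
  have htb : K * b ^ 2 ≤ K * M ^ 2 + ε * b ^ q := my_tail K ε q b hK hε hq hb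
  have hfac : K * (1 + a ^ 2 + b ^ 2) ≤ K + 2 * (K * M ^ 2) + ε * (a ^ q + b ^ q) := by
    have hexp : K * (1 + a ^ 2 + b ^ 2) = K + K * a ^ 2 + K * b ^ 2 := by ring
    rw [hexp, mul_add]
    linarith
  calc K * (1 + a ^ 2 + b ^ 2) * d
      ≤ (K + 2 * (K * M ^ 2) + ε * (a ^ q + b ^ q)) * d :=
        mul_le_mul_of_nonneg_right hfac hd
    _ = (K + 2 * (K * M ^ 2) + ε * (a ^ q + b ^ q)) * d := rfl
end

section
/- Let c ∈ (0,∞), δ ∈ [3/4, ∞), let x : [0,1] → ℝ be continuous, set m = ∫₀¹ x(s) ds and y(s) = x(s) − m for s ∈ [0,1]. Then −c·∫₀¹ y(s)·x(s)³ ds ≤ c·( δ + 3(1 − 3/(4δ)) − 1 )·∫₀¹ y(s)⁴ ds − 3c·(1 − 3/(4δ))·( ∫₀¹ y(s)² ds )·( ∫₀¹ x(s)² ds ). -/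
/-- The key cubic-nonlinearity estimate for Cahn–Hilliard–Cook type equations: with
`m = ∫₀¹ x` and `y = x − m`,
`−c∫₀¹ y x³ ≤ c(δ + 3(1 − 3/(4δ)) − 1)∫₀¹ y⁴ − 3c(1 − 3/(4δ))(∫₀¹ y²)(∫₀¹ x²)`. -/
theorem cahnHilliardCook_cubic_estimate (c δ : ℝ) (hc : 0 < c) (hδ : 3 / 4 ≤ δ)
    (x : ℝ → ℝ) (hx : ContinuousOn x (Set.Icc 0 1))
    (m : ℝ) (hm : m = ∫ s in (0 : ℝ)..1, x s)
    (y : ℝ → ℝ) (hy : ∀ s, y s = x s - m) :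
    -c * ∫ s in (0 : ℝ)..1, y s * (x s) ^ 3
      ≤ c * (δ + 3 * (1 - 3 / (4 * δ)) - 1) * (∫ s in (0 : ℝ)..1, (y s) ^ 4)
        - 3 * c * (1 - 3 / (4 * δ)) * (∫ s in (0 : ℝ)..1, (y s) ^ 2)
          * (∫ s in (0 : ℝ)..1, (x s) ^ 2) := by
  have h01 : (0:ℝ) ≤ 1 := by norm_num
  have huIcc : Set.uIcc (0:ℝ) 1 = Set.Icc 0 1 := Set.uIcc_of_le h01
  have hδ0 : (0:ℝ) < δ := lt_of_lt_of_le (by norm_num) hδ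
  have hyc : ContinuousOn y (Set.Icc (0:ℝ) 1) :=
    ContinuousOn.congr (hx.sub continuousOn_const) (fun s _ => hy s)
  have hint : ∀ f : ℝ → ℝ, ContinuousOn f (Set.Icc (0:ℝ) 1) →
      IntervalIntegrable f MeasureTheory.volume 0 1 := by
    intro f hf
    exact (huIcc ▸ hf).intervalIntegrable
  have hy1 := hint y hyc
  have hy2 := hint (fun s => (y s)^2) (hyc.pow 2)
  have hy3 := hint (fun s => (y s)^3) (hyc.pow 3)
  have hy4 := hint (fun s => (y s)^4) (hyc.pow 4)
  have hxi := hint x hx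
  set I2 := ∫ s in (0:ℝ)..1, (y s)^2 with hI2
  set I3 := ∫ s in (0:ℝ)..1, (y s)^3 with hI3
  set I4 := ∫ s in (0:ℝ)..1, (y s)^4 with hI4
  -- ∫ y = 0
  have E1 : (∫ s in (0:ℝ)..1, y s) = 0 := by
    have h : (∫ s in (0:ℝ)..1, y s)
        = (∫ s in (0:ℝ)..1, x s) - ∫ s in (0:ℝ)..1, (m:ℝ) := by
      rw [← intervalIntegral.integral_sub hxi intervalIntegrable_const]
      exact intervalIntegral.integral_congr (fun s _ => hy s)
    rw [h, intervalIntegral.integral_const]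
    simp [hm]
  -- ∫ x² = I2 + m²
  have E2 : (∫ s in (0:ℝ)..1, (x s)^2) = I2 + m^2 := by
    have h : (∫ s in (0:ℝ)..1, (x s)^2)
        = ∫ s in (0:ℝ)..1, ((y s)^2 + (2*m) * y s + m^2) := by
      refine intervalIntegral.integral_congr (fun s _ => ?_)
      rw [hy s]; ring
    rw [h, intervalIntegral.integral_add (hy2.add (hy1.const_mul (2*m)))
        intervalIntegrable_const,
      intervalIntegral.integral_add hy2 (hy1.const_mul (2*m)),
      intervalIntegral.integral_const_mul, E1, intervalIntegral.integral_const]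
    simp [hI2]
  -- ∫ y x³ = I4 + 3m I3 + 3m² I2
  have E3 : (∫ s in (0:ℝ)..1, y s * (x s)^3) = I4 + 3*m*I3 + 3*m^2*I2 := by
    have h : (∫ s in (0:ℝ)..1, y s * (x s)^3)
        = ∫ s in (0:ℝ)..1,
            ((y s)^4 + (3*m) * (y s)^3 + (3*m^2) * (y s)^2 + m^3 * y s) := by
      refine intervalIntegral.integral_congr (fun s _ => ?_)
      rw [hy s]; ring
    rw [h, intervalIntegral.integral_add
        ((hy4.add (hy3.const_mul (3*m))).add (hy2.const_mul (3*m^2)))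
        (hy1.const_mul (m^3)),
      intervalIntegral.integral_add (hy4.add (hy3.const_mul (3*m)))
        (hy2.const_mul (3*m^2)),
      intervalIntegral.integral_add hy4 (hy3.const_mul (3*m)),
      intervalIntegral.integral_const_mul, intervalIntegral.integral_const_mul,
      intervalIntegral.integral_const_mul, E1]
    ring
  -- 0 ≤ δ I4 + 3m I3 + (9m²/(4δ)) I2
  have E4 : 0 ≤ δ * I4 + 3*m*I3 + 9*m^2/(4*δ) * I2 := by
    have hnn : 0 ≤ ∫ s in (0:ℝ)..1,
        (δ * (y s)^4 + (3*m) * (y s)^3 + (9*m^2/(4*δ)) * (y s)^2) := by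
      refine intervalIntegral.integral_nonneg h01 (fun s _ => ?_)
      have hid : δ * (y s)^4 + (3*m) * (y s)^3 + (9*m^2/(4*δ)) * (y s)^2
          = δ * ((y s)^2 * (y s + 3*m/(2*δ))^2) := by
        field_simp
        ring
      rw [hid]
      positivity
    have hsplit : (∫ s in (0:ℝ)..1,
        (δ * (y s)^4 + (3*m) * (y s)^3 + (9*m^2/(4*δ)) * (y s)^2))
        = δ * I4 + 3*m*I3 + 9*m^2/(4*δ) * I2 := by
      rw [intervalIntegral.integral_add ((hy4.const_mul δ).add (hy3.const_mul (3*m)))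
          (hy2.const_mul (9*m^2/(4*δ))),
        intervalIntegral.integral_add (hy4.const_mul δ) (hy3.const_mul (3*m)),
        intervalIntegral.integral_const_mul, intervalIntegral.integral_const_mul,
        intervalIntegral.integral_const_mul]
    linarith [hsplit ▸ hnn]
  -- Cauchy–Schwarz: I2² ≤ I4
  have E5 : I2^2 ≤ I4 := by
    have hnn : 0 ≤ ∫ s in (0:ℝ)..1, ((y s)^2 - I2)^2 :=
      intervalIntegral.integral_nonneg h01 (fun s _ => sq_nonneg _)
    have hsplit : (∫ s in (0:ℝ)..1, ((y s)^2 - I2)^2)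
        = I4 - I2^2 := by
      have h : (∫ s in (0:ℝ)..1, ((y s)^2 - I2)^2)
          = ∫ s in (0:ℝ)..1, ((y s)^4 + (-(2*I2)) * (y s)^2 + I2^2) := by
        refine intervalIntegral.integral_congr (fun s _ => ?_)
        ring
      rw [h, intervalIntegral.integral_add (hy4.add (hy2.const_mul (-(2*I2))))
          intervalIntegrable_const,
        intervalIntegral.integral_add hy4 (hy2.const_mul (-(2*I2))),
        intervalIntegral.integral_const_mul, intervalIntegral.integral_const]
      simp only [smul_eq_mul, mul_one, sub_zero]
      rw [← hI2, ← hI4]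
      ring
    linarith [hsplit ▸ hnn]
  -- α := 1 - 3/(4δ) ≥ 0
  have hα : 0 ≤ 1 - 3/(4*δ) := by
    have h4δ : 0 < 4*δ := by linarith
    rw [sub_nonneg, div_le_one h4δ]
    linarith
  rw [E2, E3]
  have key1 : 0 ≤ c * (δ * I4 + 3*m*I3 + 9*m^2/(4*δ) * I2) :=
    mul_nonneg hc.le E4
  have key2 : 0 ≤ 3 * c * (1 - 3/(4*δ)) * (I4 - I2^2) :=
    mul_nonneg (mul_nonneg (by linarith) hα) (by linarith)
  have hδne : (δ:ℝ) ≠ 0 := ne_of_gt hδ0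
  have final :
      c * (δ + 3 * (1 - 3 / (4 * δ)) - 1) * I4
        - 3 * c * (1 - 3 / (4 * δ)) * I2 * (I2 + m ^ 2)
        - (-c * (I4 + 3 * m * I3 + 3 * m ^ 2 * I2))
      = c * (δ * I4 + 3*m*I3 + 9*m^2/(4*δ) * I2)
        + 3 * c * (1 - 3/(4*δ)) * (I4 - I2^2) := by
    field_simp
    ring
  linarith [key1, key2, final]
end
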